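/- Let n and x be natural numbers with x ≤ n. Then J_n((x+1)/(n+3), x) > 0. -/

import Mathlib

open Finset

/-- Key alternating binomial identity:
`∑ t (-1)^t C(P+3,t) C(s+2-t,2) = (-1)^s C(P,s)`. -/
private lemma lemJ (P : ℕ) : ∀ s : ℕ,
    ∑ t ∈ range (s + 1),
        (-1 : ℝ) ^ t * ((P + 3).choose t : ℝ) * (((s + 2 - t).choose 2 : ℕ) : ℝ)
      = (-1) ^ s * (P.choose s : ℝ) := by
  induction P with
  | zero =>
    intro s
    match s with
    | 0 => simp
    | 1 =>
      rw [Finset.sum_range_succ, Finset.sum_range_succ, Finset.sum_range_zero]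
      norm_num [Nat.choose]
    | 2 =>
      rw [Finset.sum_range_succ, Finset.sum_range_succ, Finset.sum_range_succ,
        Finset.sum_range_zero]
      norm_num [Nat.choose]
    | (u+3) =>
      have hz : (Nat.choose 0 (u + 3) : ℝ) = 0 := by
        rw [Nat.choose_eq_zero_of_lt (by omega)]; norm_num
      rw [hz, mul_zero]
      rw [← Finset.sum_subset (Finset.range_subset_range.2 (by omega : (4:ℕ) ≤ u + 3 + 1))]
      · rw [Finset.sum_range_succ, Finset.sum_range_succ, Finset.sum_range_succ,
          Finset.sum_range_succ, Finset.sum_range_zero]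
        rw [show u + 3 + 2 - 0 = u + 5 by omega, show u + 3 + 2 - 1 = u + 4 by omega,
          show u + 3 + 2 - 2 = u + 3 by omega, show u + 3 + 2 - 3 = u + 2 by omega]
        simp only [Nat.cast_choose_two,
          show ((0+3:ℕ).choose 0) = 1 from rfl, show ((0+3:ℕ).choose 1) = 3 from rfl,
          show ((0+3:ℕ).choose 2) = 3 from rfl, show ((0+3:ℕ).choose 3) = 1 from rfl]
        push_cast
        ring
      · intro t ht hnt
        have h4 : 4 ≤ t := by
          simp only [Finset.mem_range] at hnt
          omega
        have : (0 + 3).choose t = 0 := Nat.choose_eq_zero_of_lt (by omega)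
        rw [this]
        norm_num
  | succ P ih =>
    intro s
    match s with
    | 0 => simp
    | (s+1) =>
      rw [Finset.sum_range_succ']
      have e1 : ∀ i ∈ Finset.range (s + 1),
          (-1 : ℝ) ^ (i + 1) * ((P + 1 + 3).choose (i + 1) : ℝ)
              * (((s + 1 + 2 - (i + 1)).choose 2 : ℕ) : ℝ)
            = (-1 : ℝ) ^ (i + 1) * ((P + 3).choose (i + 1) : ℝ)
                * (((s + 1 + 2 - (i + 1)).choose 2 : ℕ) : ℝ)
              + (-(1 : ℝ)) * ((-1 : ℝ) ^ i * ((P + 3).choose i : ℝ)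
                * (((s + 2 - i).choose 2 : ℕ) : ℝ)) := by
        intro i hi
        have h1 : P + 1 + 3 = (P + 3) + 1 := by ring
        rw [h1, Nat.choose_succ_succ']
        have h2 : s + 1 + 2 - (i + 1) = s + 2 - i := by omega
        rw [h2]
        push_cast
        ring
      rw [Finset.sum_congr rfl e1, Finset.sum_add_distrib, ← Finset.mul_sum, ih s]
      have h3 := ih (s + 1)
      rw [Finset.sum_range_succ'] at h3
      simp only [Nat.choose_zero_right, Nat.cast_one, pow_zero, one_mul, mul_one,
        Nat.sub_zero] at h3 ⊢
      rw [add_right_comm, h3]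
      have h4 : (P + 1).choose (s + 1) = P.choose s + P.choose (s + 1) :=
        Nat.choose_succ_succ' _ _
      rw [h4]
      push_cast
      ring

/-- The central identity: the alternating sum equals a manifestly
nonnegative sum. -/
private lemma keyId (x m : ℕ) (a : ℝ) :
    ∑ r ∈ range (m + 1),
        ((m + x + 3).choose (m - r) : ℝ) * ((x + r).choose r : ℝ) * (-1) ^ r * a ^ r
      = ∑ j ∈ range (m + 1),
        ((m + x + 3).choose j : ℝ) * (((m + 2 - j).choose 2 : ℕ) : ℝ)
          * (1 - a) ^ j * a ^ (m - j) := by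
  have hL : ∀ r ∈ range (m + 1),
      ((m + x + 3).choose (m - r) : ℝ) * ((x + r).choose r : ℝ) * (-1) ^ r * a ^ r
        = ∑ i ∈ range (r + 1),
            ((m + x + 3).choose (m - r) : ℝ) * ((-1 : ℝ) ^ i * ((x + r + 3).choose i : ℝ)
              * (((r + 2 - i).choose 2 : ℕ) : ℝ)) * a ^ r := by
    intro r _
    have hJ := lemJ (x + r) r
    calc ((m + x + 3).choose (m - r) : ℝ) * ((x + r).choose r : ℝ) * (-1) ^ r * a ^ r
        = ((m + x + 3).choose (m - r) : ℝ)
            * ((-1 : ℝ) ^ r * ((x + r).choose r : ℝ)) * a ^ r := by ring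
      _ = ((m + x + 3).choose (m - r) : ℝ)
            * (∑ i ∈ range (r + 1), (-1 : ℝ) ^ i * ((x + r + 3).choose i : ℝ)
              * (((r + 2 - i).choose 2 : ℕ) : ℝ)) * a ^ r := by rw [hJ]
      _ = _ := by rw [Finset.mul_sum, Finset.sum_mul]
  have hR : ∀ j ∈ range (m + 1),
      ((m + x + 3).choose j : ℝ) * (((m + 2 - j).choose 2 : ℕ) : ℝ)
          * (1 - a) ^ j * a ^ (m - j)
        = ∑ i ∈ range (j + 1),
            ((m + x + 3).choose j : ℝ) * (((m + 2 - j).choose 2 : ℕ) : ℝ)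
              * ((-a) ^ i * (j.choose i : ℝ)) * a ^ (m - j) := by
    intro j _
    have hb : (1 - a) ^ j = ∑ i ∈ range (j + 1), (-a) ^ i * (j.choose i : ℝ) := by
      rw [show (1 : ℝ) - a = -a + 1 by ring, add_pow]
      refine Finset.sum_congr rfl fun i _ => ?_
      rw [one_pow, mul_one]
    rw [hb, Finset.mul_sum, Finset.sum_mul]
  rw [Finset.sum_congr rfl hL, Finset.sum_congr rfl hR,
    Finset.sum_sigma', Finset.sum_sigma']
  refine Finset.sum_nbij' (fun p => ⟨m - p.1 + p.2, p.2⟩) (fun p => ⟨m - p.1 + p.2, p.2⟩)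
    ?_ ?_ ?_ ?_ ?_
  · rintro ⟨r, i⟩ hp
    simp only [Finset.mem_sigma, Finset.mem_range] at hp ⊢
    omega
  · rintro ⟨j, i⟩ hp
    simp only [Finset.mem_sigma, Finset.mem_range] at hp ⊢
    omega
  · rintro ⟨r, i⟩ hp
    simp only [Finset.mem_sigma, Finset.mem_range] at hp
    have : m - (m - r + i) + i = r := by omega
    simp [this]
  · rintro ⟨j, i⟩ hp
    simp only [Finset.mem_sigma, Finset.mem_range] at hp
    have : m - (m - j + i) + i = j := by omega
    simp [this]
  · rintro ⟨r, i⟩ hp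
    simp only [Finset.mem_sigma, Finset.mem_range] at hp
    obtain ⟨hr, hi⟩ := hp
    have hr' : r ≤ m := by omega
    have hi' : i ≤ r := by omega
    -- abbreviations
    set j := m - r + i with hj
    have hmj : m - j = r - i := by omega
    have hm2j : m + 2 - j = r + 2 - i := by omega
    have hcm := Nat.choose_mul (n := m + x + 3) (show m - r ≤ j by omega)
    have hNs : m + x + 3 - (m - r) = x + r + 3 := by omega
    have hji : j - (m - r) = i := by omega
    rw [hNs, hji] at hcm
    have hsym : j.choose (m - r) = j.choose i := by
      rw [show m - r = j - i by omega, Nat.choose_symm (by omega : i ≤ j)]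
    rw [hsym] at hcm
    have hcast : ((m + x + 3).choose j : ℝ) * (j.choose i : ℝ)
        = ((m + x + 3).choose (m - r) : ℝ) * (((x + r + 3).choose i : ℕ) : ℝ) := by
      exact_mod_cast congrArg (Nat.cast (R := ℝ)) hcm
    have hpow : a ^ i * a ^ (r - i) = a ^ r := by
      rw [← pow_add]
      congr 1
      omega
    show ((m + x + 3).choose (m - r) : ℝ) * ((-1 : ℝ) ^ i * ((x + r + 3).choose i : ℝ)
          * (((r + 2 - i).choose 2 : ℕ) : ℝ)) * a ^ r
        = ((m + x + 3).choose j : ℝ) * (((m + 2 - j).choose 2 : ℕ) : ℝ)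
            * ((-a) ^ i * (j.choose i : ℝ)) * a ^ (m - j)
    rw [hmj, hm2j]
    have : ((m + x + 3).choose j : ℝ) * (((r + 2 - i).choose 2 : ℕ) : ℝ)
          * ((-a) ^ i * (j.choose i : ℝ)) * a ^ (r - i)
        = (((m + x + 3).choose j : ℝ) * (j.choose i : ℝ))
            * (((r + 2 - i).choose 2 : ℕ) : ℝ) * (-1 : ℝ) ^ i * (a ^ i * a ^ (r - i)) := by
      ring
    rw [this, hcast, hpow]
    ring

/-- The polynomial `J_n(a, x)`. -/
noncomputable def Jn (n x : ℕ) (a : ℝ) : ℝ :=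
  2 * a ^ (x + 2) * ∑ r ∈ Finset.range (n - x + 1),
      ((n + 3).choose (n - x - r) : ℝ) * ((x + r).choose r : ℝ) * (-1) ^ r * a ^ r
    - ((n : ℝ) - x + 1) * ((n : ℝ) + 3) * a + ((n : ℝ) - x + 1) * ((x : ℝ) + 1)

/-- `J_n((x+1)/(n+3), x) > 0`. -/
theorem Jn_pos_at_lower (n x : ℕ) (hx : x ≤ n) :
    0 < Jn n x (((x : ℝ) + 1) / ((n : ℝ) + 3)) := by
  set a : ℝ := ((x : ℝ) + 1) / ((n : ℝ) + 3) with ha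
  have hn3 : (0 : ℝ) < (n : ℝ) + 3 := by positivity
  have ha0 : 0 < a := by positivity
  have ha1 : a ≤ 1 := by
    rw [ha, div_le_one hn3]
    have : (x : ℝ) ≤ (n : ℝ) := by exact_mod_cast hx
    linarith
  have hcancel : ((n : ℝ) - x + 1) * ((n : ℝ) + 3) * a = ((n : ℝ) - x + 1) * ((x : ℝ) + 1) := by
    rw [ha]
    field_simp
  rw [Jn, show n + 3 = (n - x) + x + 3 by omega, keyId, hcancel, sub_add_cancel]
  set m := n - x with hm
  have hS : 0 < ∑ j ∈ range (m + 1),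
      ((m + x + 3).choose j : ℝ) * (((m + 2 - j).choose 2 : ℕ) : ℝ)
        * (1 - a) ^ j * a ^ (m - j) := by
    apply Finset.sum_pos'
    · intro j _
      apply mul_nonneg
      apply mul_nonneg
      apply mul_nonneg
      · exact Nat.cast_nonneg _
      · exact Nat.cast_nonneg _
      · exact pow_nonneg (by linarith) _
      · exact pow_nonneg ha0.le _
    · refine ⟨0, Finset.mem_range.2 (by omega), ?_⟩
      have h1 : (0 : ℝ) < (((m + 2).choose 2 : ℕ) : ℝ) := by
        exact_mod_cast Nat.choose_pos (by omega : 2 ≤ m + 2)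
      simp only [Nat.choose_zero_right, Nat.cast_one, one_mul, pow_zero, mul_one,
        Nat.sub_zero]
      exact mul_pos h1 (pow_pos ha0 _)
  positivity
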